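/- Let z₁, z₂, t be real numbers with z₁ < z₂, z₂ > 1 and t > 0. Then ( exp((1 − z₂)·t) + exp((1 − z₁)·t) ) / ( 1 + exp((z₂ − z₁)·t) ) < 1. -/

import Mathlib

/-- Harmful-effect inequality of the Supplementary Material counterexample:
the multiplicative factor `(exp((1 − z₂)t) + exp((1 − z₁)t))/(1 + exp((z₂ − z₁)t))`
is strictly below 1 when `z₁ < z₂`, `z₂ > 1` and `t > 0`. -/
theorem harmful_effect_inequality (z₁ z₂ t : ℝ) (hz : z₁ < z₂) (hz₂ : 1 < z₂) (ht : 0 < t) :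
    (Real.exp ((1 - z₂) * t) + Real.exp ((1 - z₁) * t))
        / (1 + Real.exp ((z₂ - z₁) * t)) < 1 := by
  have hpos : (0:ℝ) < 1 + Real.exp ((z₂ - z₁) * t) := by positivity
  rw [div_lt_one hpos]
  have h1 : Real.exp ((1 - z₂) * t) < 1 := by
    rw [Real.exp_lt_one_iff]; nlinarith
  have h2 : Real.exp ((1 - z₁) * t) < Real.exp ((z₂ - z₁) * t) := by
    apply Real.exp_lt_exp.mpr; nlinarith
  linarith
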